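/- Let C be an isomorphism-closed class of topological spaces each of which is indiscrete, and suppose C is algebraic, i.e. the full subcategory C of topological spaces has coequalizers, its underlying-set functor U : C → Set has a left adjoint, and U preserves and reflects regular epimorphisms. Then C is the class of all one-point topological spaces, or the class of all topological spaces with at most one point, or the class of all indiscrete topological spaces. -/

import Mathlib

universe u

open Topology CategoryTheory CategoryTheory.Limits

/-- A class of topological spaces (in a fixed universe `u`). -/
abbrev TopClass := ∀ X : Type u, TopologicalSpace X → Prop

/-- `C` is closed under homeomorphisms. -/
def TopClass.IsoClosed (C : TopClass.{u}) : Prop :=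
  ∀ (X Y : Type u) (tX : TopologicalSpace X) (tY : TopologicalSpace Y),
    C X tX → Nonempty (@Homeomorph X Y tX tY) → C Y tY

/-- A topological space is indiscrete if its only open sets are `∅` and the whole space. -/
def IsIndiscreteTop (X : Type u) (tX : TopologicalSpace X) : Prop :=
  ∀ s : Set X, @IsOpen X tX s → s = ∅ ∨ s = Set.univ

/-- The full subcategory of `TopCat` determined by a class of topological spaces. -/
abbrev TopClass.Cat (C : TopClass.{u}) : Type (u + 1) :=
  ObjectProperty.FullSubcategory (fun X : TopCat.{u} => C X X.str)

/-- The underlying-set functor of the full subcategory determined by `C`. -/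
noncomputable def TopClass.U (C : TopClass.{u}) : C.Cat ⥤ Type u :=
  ObjectProperty.ι (P := _) ⋙ forget TopCat

/-- A concrete category (over `Type u`) is algebraic if it has coequalizers, its
underlying-set functor has a left adjoint and preserves and reflects regular
epimorphisms. -/
def AlgebraicConcreteCategory {D : Type (u + 1)} [Category.{u} D] (U : D ⥤ Type u) : Prop :=
  HasCoequalizers D ∧ U.IsRightAdjoint ∧
    (∀ (A B : D) (f : A ⟶ B), Nonempty (RegularEpi f) → Nonempty (RegularEpi (U.map f))) ∧
    (∀ (A B : D) (f : A ⟶ B), Nonempty (RegularEpi (U.map f)) → Nonempty (RegularEpi f))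

/- ### Auxiliary lemmas -/

lemma aux_cont_of_indiscrete {X Y : Type u} {tX : TopologicalSpace X} {tY : TopologicalSpace Y}
    (hY : IsIndiscreteTop Y tY) (f : X → Y) : @Continuous X Y tX tY f := by
  rw [@continuous_def]
  intro s hs
  rcases hY s hs with h | h <;> subst h <;> simp

noncomputable def auxHomeo {X Y : Type u} (tX : TopologicalSpace X) (tY : TopologicalSpace Y)
    (hX : IsIndiscreteTop X tX) (hY : IsIndiscreteTop Y tY) (e : X ≃ Y) :
    @Homeomorph X Y tX tY :=
  @Homeomorph.mk X Y tX tY e (aux_cont_of_indiscrete hY e) (aux_cont_of_indiscrete hX e.symm)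

lemma aux_subsingleton_indiscrete {X : Type u} (tX : TopologicalSpace X) [Subsingleton X] :
    IsIndiscreteTop X tX := by
  intro s _
  rcases s.eq_empty_or_nonempty with h | ⟨x, hx⟩
  · exact Or.inl h
  · refine Or.inr (Set.eq_univ_of_forall fun y => ?_)
    rwa [Subsingleton.elim y x]

lemma aux_transfer (C : TopClass.{u}) (hiso : C.IsoClosed)
    (hind : ∀ (X : Type u) (tX : TopologicalSpace X), C X tX → IsIndiscreteTop X tX)
    {X Y : Type u} {tX : TopologicalSpace X} {tY : TopologicalSpace Y}
    (h : C X tX) (hY : IsIndiscreteTop Y tY) (e : X ≃ Y) : C Y tY :=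
  hiso X Y tX tY h ⟨auxHomeo tX tY (hind X tX h) hY e⟩

theorem algebraic_class_of_indiscrete_Top
    (C : TopClass.{u}) (hiso : C.IsoClosed)
    (hind : ∀ (X : Type u) (tX : TopologicalSpace X), C X tX → IsIndiscreteTop X tX)
    (halg : AlgebraicConcreteCategory C.U) :
    (∀ (X : Type u) (tX : TopologicalSpace X), C X tX ↔ (Nonempty X ∧ Subsingleton X)) ∨
    (∀ (X : Type u) (tX : TopologicalSpace X), C X tX ↔ Subsingleton X) ∨
    (∀ (X : Type u) (tX : TopologicalSpace X), C X tX ↔ IsIndiscreteTop X tX) := by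
  classical
  obtain ⟨hcoeq, hadj, -, -⟩ := halg
  haveI := hcoeq
  haveI := hadj
  set F : Type u ⥤ C.Cat := C.U.leftAdjoint with hF
  have adj : F ⊣ C.U := Adjunction.ofIsRightAdjoint C.U
  -- a nonempty member
  set A₀ : C.Cat := F.obj PUnit.{u+1} with hA₀
  have x₀ : C.U.obj A₀ := adj.unit.app PUnit.{u+1} PUnit.unit
  by_cases hbig : ∃ (X : Type u) (tX : TopologicalSpace X), C X tX ∧ ∃ a b : X, a ≠ b
  · -- there is a member with two points: C is all indiscrete spaces
    right; right
    intro X tX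
    refine ⟨hind X tX, fun hX => ?_⟩
    obtain ⟨W, tW, hW, a, b, hab⟩ := hbig
    set Wobj : C.Cat := ⟨@TopCat.of W tW, hW⟩ with hWobj
    rcases isEmpty_or_nonempty X with hXe | hXn
    · -- empty case: F.obj PEmpty has empty underlying set
      set I : C.Cat := F.obj PEmpty.{u+1} with hI
      haveI : IsEmpty (C.U.obj I) := by
        rw [isEmpty_iff]
        intro i
        have hsub : Subsingleton (I ⟶ Wobj) :=
          ((adj.homEquiv PEmpty.{u+1} Wobj).subsingleton_congr).mpr
            ⟨fun f g => TypeCat.homEquiv.injective (funext fun z => z.elim)⟩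
        have hfg : (⟨fun _ => a, continuous_const⟩ : C(I.obj, Wobj.obj)) =
            (⟨fun _ => b, continuous_const⟩ : C(I.obj, Wobj.obj)) :=
          congrArg (fun f : I ⟶ Wobj => f.hom.hom) (hsub.elim
            (InducedCategory.homMk (TopCat.ofHom ⟨fun _ => a, continuous_const⟩))
            (InducedCategory.homMk (TopCat.ofHom ⟨fun _ => b, continuous_const⟩)))
        exact hab (congrFun (congrArg ContinuousMap.toFun hfg) i)
      exact aux_transfer C hiso hind I.property hX
        (Equiv.equivOfIsEmpty (C.U.obj I) X)
    · -- nonempty case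
      set B : C.Cat := F.obj X with hB
      set η : X → C.U.obj B := ⇑(adj.unit.app X) with hη
      have hinj : Function.Injective η := by
        intro x y hxy
        by_contra hne
        set g : X ⟶ C.U.obj Wobj := TypeCat.ofHom fun z => if z = x then a else b with hg
        set gt : B ⟶ Wobj := (adj.homEquiv X Wobj).symm g with hgt
        have hfac : (adj.homEquiv X Wobj) gt = g := (adj.homEquiv X Wobj).apply_symm_apply g
        rw [Adjunction.homEquiv_unit] at hfac
        have h1 : g x = g y := by
          have hx' := types_congr_hom hfac x
          have hy' := types_congr_hom hfac y
          simp only [types_comp_apply] at hx' hy'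
          rw [← hx', ← hy']
          exact congrArg (C.U.map gt) hxy
        rw [hg] at h1
        simp [TypeCat.ofHom_apply, Ne.symm hne] at h1
        exact hab h1
      obtain ⟨r, hr⟩ := hinj.hasLeftInverse
      have hBind : IsIndiscreteTop B.obj B.obj.str := hind _ _ B.property
      set et : B ⟶ B := InducedCategory.homMk (TopCat.ofHom
        (⟨fun z => η (r z), aux_cont_of_indiscrete hBind _⟩ : C(B.obj, B.obj)))
        with het
      have hee : et ≫ et = 𝟙 B ≫ et := by
        apply ObjectProperty.hom_ext
        apply TopCat.hom_ext
        apply ContinuousMap.ext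
        intro z
        show η (r (η (r z))) = η (r z)
        rw [hr (r z)]
      set Q : C.Cat := coequalizer et (𝟙 B) with hQ
      set π : B ⟶ Q := coequalizer.π et (𝟙 B) with hπ
      set t : Q ⟶ B := coequalizer.desc et hee with ht
      have hπt : π ≫ t = et := coequalizer.π_desc et hee
      have htπ : t ≫ π = 𝟙 Q := by
        rw [← cancel_epi π, ← Category.assoc, hπt, Category.comp_id]
        have := coequalizer.condition et (𝟙 B)
        rwa [Category.id_comp] at this
      -- underlying functions
      have h1 : ∀ z : C.U.obj B, C.U.map t (C.U.map π z) = η (r z) := by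
        intro z
        have := types_congr_hom (congrArg C.U.map hπt) z
        rw [C.U.map_comp] at this
        exact this
      have h2 : ∀ q : C.U.obj Q, C.U.map π (C.U.map t q) = q := by
        intro q
        have := types_congr_hom (congrArg C.U.map htπ) q
        rw [C.U.map_comp, C.U.map_id] at this
        exact this
      have h3 : ∀ z : C.U.obj B, C.U.map π (η (r z)) = C.U.map π z := by
        intro z
        have := types_congr_hom (congrArg C.U.map (coequalizer.condition et (𝟙 B))) z
        rw [C.U.map_comp, C.U.map_comp] at this
        simp only [types_comp_apply] at this
        have h4 : C.U.map (𝟙 B) z = z := types_congr_hom (C.U.map_id B) z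
        calc C.U.map π (η (r z)) = C.U.map π (C.U.map et z) := rfl
          _ = C.U.map π (C.U.map (𝟙 B) z) := this
          _ = C.U.map π z := by rw [h4]
      set eqv : C.U.obj Q ≃ X :=
        { toFun := fun q => r (C.U.map t q)
          invFun := fun x => C.U.map π (η x)
          left_inv := by
            intro q
            show C.U.map π (η (r (C.U.map t q))) = q
            rw [h3, h2]
          right_inv := by
            intro x
            show r (C.U.map t (C.U.map π (η x))) = x
            rw [h1, hr (r (η x)), hr x] } with heqv
      exact aux_transfer C hiso hind Q.property hX eqv
  · -- all members are subsingletons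
    push_neg at hbig
    have hss : ∀ (X : Type u) (tX : TopologicalSpace X), C X tX → Subsingleton X := by
      intro X tX h
      refine ⟨fun a b => ?_⟩
      by_contra hne
      exact hne (hbig X tX h a b |>.symm ▸ rfl)
    haveI hssA : Subsingleton ↥A₀.obj := hss _ _ A₀.property
    by_cases hemp : ∃ (X : Type u) (tX : TopologicalSpace X), C X tX ∧ IsEmpty X
    · right; left
      intro X tX
      constructor
      · exact fun h => hss X tX h
      · intro hX
        haveI := hX
        rcases isEmpty_or_nonempty X with hXe | hXn
        · obtain ⟨E, tE, hE, hEe⟩ := hemp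
          haveI := hEe
          exact aux_transfer C hiso hind hE (aux_subsingleton_indiscrete tX)
            (Equiv.equivOfIsEmpty E X)
        · exact aux_transfer C hiso hind A₀.property (aux_subsingleton_indiscrete tX)
            (equivOfSubsingletonOfSubsingleton (fun _ => hXn.some) (fun _ => x₀))
    · left
      intro X tX
      constructor
      · intro h
        refine ⟨?_, hss X tX h⟩
        by_contra hne
        exact hemp ⟨X, tX, h, not_nonempty_iff.mp hne⟩
      · rintro ⟨hXn, hXs⟩
        haveI := hXs
        exact aux_transfer C hiso hind A₀.property (aux_subsingleton_indiscrete tX)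
          (equivOfSubsingletonOfSubsingleton (fun _ => hXn.some) (fun _ => x₀))
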